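/- A set A is Schnorr trivial if and only if there exists a set B such that A ≤_{tt(tu)} B. -/

import Mathlib

open scoped Classical
open Filter

/-- The prefix of length `n` of a set (element of Cantor space), as a binary string. -/
def opre (B : ℕ → Bool) (n : ℕ) : List Bool := (List.range n).map B

/-- An order function: computable, nondecreasing and unbounded. -/
def IsOrder (f : ℕ → ℕ) : Prop := Computable f ∧ Monotone f ∧ ∀ m, ∃ n, m ≤ f n

/-- The discrete inverse of a nondecreasing unbounded function:
`discInv f k` is the greatest `n` with `f n ≤ k`. -/
noncomputable def discInv (f : ℕ → ℕ) (k : ℕ) : ℕ := sSup {n | f n ≤ k}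

/-- There is a Turing reduction computing the function `f` from the set oracle `B`
whose use on input `n` is bounded by `u n`: a monotone partial computable
string functional which computes `f n` from the prefix `B↾(u n)`. -/
def RedUse (f : ℕ → ℕ) (B : ℕ → Bool) (u : ℕ → ℕ) : Prop :=
  ∃ F : List Bool → ℕ →. ℕ, Partrec₂ F ∧
    (∀ (σ τ : List Bool) (n y : ℕ), σ <+: τ → y ∈ F σ n → y ∈ F τ n) ∧
    ∀ n, f n ∈ F (opre B (u n)) n

/-- A set, viewed as a `ℕ`-valued function. -/
def natOf (A : ℕ → Bool) : ℕ → ℕ := fun n => cond (A n) 1 0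

/-- Turing reduction of the set `A` to the set `B` with use bounded by `u`. -/
def SRedUse (A B : ℕ → Bool) (u : ℕ → ℕ) : Prop := RedUse (natOf A) B u

/-- Turing reducibility of a function to a set. -/
def TRed (f : ℕ → ℕ) (B : ℕ → Bool) : Prop := ∃ u, RedUse f B u

/-- Weak truth-table reducibility of a function to a set: the use is computably bounded. -/
def WttRed (f : ℕ → ℕ) (B : ℕ → Bool) : Prop := ∃ u, Computable u ∧ RedUse f B u

/-- Weak truth-table reducibility between sets. -/
def SWttRed (A B : ℕ → Bool) : Prop := WttRed (natOf A) B

/-- `A` is reducible to `B` with tiny use: for every order function `h` there is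
a Turing reduction of `A` to `B` with use bounded by `h`. -/
def TtuRed (A B : ℕ → Bool) : Prop := ∀ h, IsOrder h → SRedUse A B h

/-- `A` is uniformly reducible to `B` with tiny use: a single Turing reduction of
`A` to `B` whose use function is dominated by every order function. -/
def UTtuRed (A B : ℕ → Bool) : Prop :=
  ∃ u : ℕ → ℕ, (∀ h, IsOrder h → ∀ᶠ n in atTop, u n ≤ h n) ∧ SRedUse A B u

/-- The effective join of two sets. -/
def join (A B : ℕ → Bool) : ℕ → Bool := fun n => if n % 2 = 0 then A (n / 2) else B (n / 2)

/-- The halting set `K = {e : φ_e(e)↓}`. -/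
noncomputable def Khalt : ℕ → Bool := fun e =>
  decide (((Denumerable.ofNat Nat.Partrec.Code e).eval e).Dom)

/-- `U` is an optimal machine (for plain Kolmogorov complexity on binary strings). -/
def Optimal (U : List Bool →. List Bool) : Prop :=
  Partrec U ∧ ∀ M : List Bool →. List Bool, Partrec M →
    ∃ c, ∀ (p x : List Bool), x ∈ M p → ∃ q : List Bool, q.length ≤ p.length + c ∧ x ∈ U q

/-- Plain Kolmogorov complexity of a string relative to the machine `U`. -/
noncomputable def Cplx (U : List Bool →. List Bool) (x : List Bool) : ℕ :=
  sInf { k | ∃ p : List Bool, p.length = k ∧ x ∈ U p }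

/-- Kolmogorov complexity of a natural number (coded as a binary string). -/
noncomputable def CplxN (U : List Bool →. List Bool) (n : ℕ) : ℕ := Cplx U (Nat.bits n)

/-- `A` is anti-complex: for every order function `f`, `C(A↾f(n)) ≤ n` for almost all `n`. -/
def AntiComplex (U : List Bool →. List Bool) (A : ℕ → Bool) : Prop :=
  ∀ f, IsOrder f → ∀ᶠ n in atTop, Cplx U (opre A (f n)) ≤ n

/-- `g_A(k)` is the least `n` such that `C(A↾m) > k` for all `m ≥ n`. -/
noncomputable def gA (U : List Bool →. List Bool) (A : ℕ → Bool) (k : ℕ) : ℕ :=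
  sInf {n | ∀ m, n ≤ m → k < Cplx U (opre A m)}

/-- Coding of binary strings by natural numbers, ordered by length first. -/
def strToNat (l : List Bool) : ℕ := l.foldl (fun a b => 2 * a + cond b 1 0) 1 - 1

/-- The least `U`-description of the string `x`, as a natural number. -/
noncomputable def leastDesc (U : List Bool →. List Bool) (x : List Bool) : ℕ :=
  sInf {m | ∃ p : List Bool, strToNat p = m ∧ x ∈ U p}

/-- The set `A* = {(A↾g_A(k))* : k ∈ ℕ}` of least descriptions of the segments `A↾g_A(k)`. -/
noncomputable def Astar (U : List Bool →. List Bool) (A : ℕ → Bool) : ℕ → Bool :=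
  fun m => decide (∃ k, m = leastDesc U (opre A (gA U A k)))

/-- A c.e. trace for `f` bounded by `h`: a uniformly c.e. sequence of finite sets
`T n` with `f n ∈ T n` and `|T n| ≤ h n`. -/
def CeTrace (h f : ℕ → ℕ) : Prop :=
  ∃ S : ℕ → ℕ → Prop, REPred (fun p : ℕ × ℕ => S p.1 p.2) ∧
    ∀ n, S n (f n) ∧ { y | S n y }.Finite ∧ Set.ncard { y | S n y } ≤ h n

/-- The wtt-degree of `A` is r.e. traceable. -/
def ReTraceableWtt (A : ℕ → Bool) : Prop :=
  ∃ h, IsOrder h ∧ ∀ f : ℕ → ℕ, WttRed f A → CeTrace h f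

/-- A computable trace for `f` bounded by `h` (finite sets given by canonical indices,
here: by computable lists). -/
def CompTrace (h f : ℕ → ℕ) : Prop :=
  ∃ T : ℕ → List ℕ, Computable T ∧ ∀ n, f n ∈ T n ∧ (T n).length ≤ h n

/-- Truth-table reducibility of a function to a set: a total computable functional
with computably bounded use. -/
def TtRed (f : ℕ → ℕ) (A : ℕ → Bool) : Prop :=
  ∃ u : ℕ → ℕ, Computable u ∧ ∃ F : List Bool → ℕ → ℕ, Computable₂ F ∧
    ∀ n, F (opre A (u n)) n = f n

/-- `A` is Schnorr trivial (via the Franklin–Stephan characterisation: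
its truth-table degree is computably traceable). -/
def SchnorrTrivial (A : ℕ → Bool) : Prop :=
  ∃ h, IsOrder h ∧ ∀ f : ℕ → ℕ, TtRed f A → CompTrace h f

/-- `A` is truth-table reducible to `B` with tiny use: for every order function `h`
there is a total computable functional computing `A` from `B` with use bounded by `h`. -/
def TttuRed (A B : ℕ → Bool) : Prop :=
  ∀ h, IsOrder h → ∃ F : List Bool → ℕ → Bool, Computable₂ F ∧
    ∀ n, F (opre B (h n)) n = A n

/-- `g` dominates every computable function. -/
def Dominant (g : ℕ → ℕ) : Prop :=
  ∀ f : ℕ → ℕ, Computable f → ∀ᶠ n in atTop, f n ≤ g n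

/-- Prefix of a function oracle. -/
def fpre (f : ℕ → ℕ) (n : ℕ) : List ℕ := (List.range n).map f

/-- Reduction of a set `A` to a function oracle `f` with use bounded by `u`. -/
def RedUseFn (A : ℕ → Bool) (f : ℕ → ℕ) (u : ℕ → ℕ) : Prop :=
  ∃ F : List ℕ → ℕ →. ℕ, Partrec₂ F ∧
    (∀ (σ τ : List ℕ) (n y : ℕ), σ <+: τ → y ∈ F σ n → y ∈ F τ n) ∧
    ∀ n, natOf A n ∈ F (fpre f (u n)) n

/-- Uniform reducibility with tiny use to a function oracle. -/
def UTtuRedFn (A : ℕ → Bool) (f : ℕ → ℕ) : Prop :=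
  ∃ u : ℕ → ℕ, (∀ h, IsOrder h → ∀ᶠ n in atTop, u n ≤ h n) ∧ RedUseFn A f u

/-- The graph of `f`, coded as a set via the standard pairing. -/
def graphOf (f : ℕ → ℕ) : ℕ → Bool :=
  fun m => decide (f (Nat.unpair m).1 = (Nat.unpair m).2)

/-- The real number with binary expansion `X`. -/
noncomputable def realOf (X : ℕ → Bool) : ℝ := ∑' n, cond (X n) (((2:ℝ) ^ (n + 1))⁻¹) 0

/-- `X` is a left-c.e. real. -/
def LeftCE (X : ℕ → Bool) : Prop :=
  ∃ q : ℕ → ℚ, Computable q ∧ Monotone q ∧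
    Tendsto (fun n => (q n : ℝ)) atTop (nhds (realOf X))

/-- `X` is Martin-Löf random: it passes every Martin-Löf test (given as a uniformly
c.e. sequence of sets of strings of measure at most `2^{-n}`). -/
def MLRandom (X : ℕ → Bool) : Prop :=
  ∀ W : ℕ → List Bool → Prop,
    REPred (fun p : ℕ × List Bool => W p.1 p.2) →
    (∀ n, ∑' σ : {σ : List Bool // W n σ}, ((2:ℝ) ^ (σ : List Bool).length)⁻¹ ≤ ((2:ℝ) ^ n)⁻¹) →
    ∃ n, ∀ σ, W n σ → opre X σ.length ≠ σ

/-- `A` is a c.e. set. -/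
def CeSet (A : ℕ → Bool) : Prop := REPred (fun n => A n = true)


namespace Stmt17Aux

theorem opre_length (B : ℕ → Bool) (n : ℕ) : (opre B n).length = n := by
  simp [opre]

theorem opre_getD {B : ℕ → Bool} {k n : ℕ} (h : k < n) : (opre B n).getD k false = B k := by
  rw [List.getD_eq_getElem?_getD]
  simp [opre, List.getElem?_map, List.getElem?_range h]

/-- pseudo-take via getD -/
def pre (σ : List Bool) (l : ℕ) : List Bool := (List.range l).map (fun q => σ.getD q false)

theorem pre_opre {A : ℕ → Bool} {l m : ℕ} (h : l ≤ m) : pre (opre A m) l = opre A l := by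
  unfold pre opre
  refine List.map_congr_left ?_
  intro q hq
  rw [List.mem_range] at hq
  exact opre_getD (lt_of_lt_of_le hq h)

/-- stv: the fold -/
def stv (s : List Bool) : ℕ := s.foldl (fun a b => 2 * a + cond b 1 0) 1

theorem stv_aux (s : List Bool) : ∀ a : ℕ, a ≤ s.foldl (fun a b => 2 * a + cond b 1 0) a := by
  induction s with
  | nil => intro a; simp
  | cons b t ih =>
    intro a
    simp only [List.foldl_cons]
    calc a ≤ 2 * a + cond b 1 0 := by cases b <;> simp <;> omega
    _ ≤ _ := ih _

theorem stv_pos (s : List Bool) : 1 ≤ stv s := stv_aux s 1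

theorem strToNat_succ (s : List Bool) : strToNat s + 1 = stv s := by
  have := stv_pos s
  unfold strToNat stv at *
  omega

theorem stv_append (s : List Bool) (b : Bool) :
    stv (s ++ [b]) = 2 * stv s + cond b 1 0 := by
  unfold stv
  rw [List.foldl_append]
  simp

theorem stv_extract : ∀ (s : List Bool) (k : ℕ), k < s.length →
    stv s / 2 ^ (s.length - 1 - k) % 2 = cond (s.getD k false) 1 0 := by
  intro s
  induction s using List.reverseRecOn with
  | nil => intro k h; simp at h
  | append_singleton t b ih =>
    intro k hk
    rw [stv_append]
    rcases Nat.lt_or_ge k t.length with h | h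
    · have hlen : (t ++ [b]).length - 1 - k = (t.length - 1 - k) + 1 := by
        simp; omega
      rw [hlen]
      have h2 : (2 * stv t + cond b 1 0) / 2 ^ (t.length - 1 - k + 1)
          = stv t / 2 ^ (t.length - 1 - k) := by
        rw [pow_succ, mul_comm (2 ^ (t.length - 1 - k)) 2, ← Nat.div_div_eq_div_mul]
        congr 1
        rcases b with _ | _ <;> simp <;> omega
      rw [h2]
      have hg : (t ++ [b]).getD k false = t.getD k false := by
        rw [List.getD_eq_getElem?_getD, List.getD_eq_getElem?_getD,
          List.getElem?_append_left h]
      rw [hg]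
      exact ih k h
    · have hk' : k = t.length := by simp at hk; omega
      subst hk'
      have hlen : (t ++ [b]).length - 1 - t.length = 0 := by simp
      rw [hlen]
      have hg : (t ++ [b]).getD t.length false = b := by
        rw [List.getD_eq_getElem?_getD]
        simp
      rw [hg]
      simp only [pow_zero, Nat.div_one]
      rcases b with _ | _ <;> simp <;> omega

theorem bit_extract {s : List Bool} {k : ℕ} (h : k < s.length) :
    s.getD k false = decide ((strToNat s + 1) / 2 ^ (s.length - 1 - k) % 2 = 1) := by
  rw [strToNat_succ]
  have := stv_extract s k h
  rcases hb : s.getD k false <;> rw [hb] at this <;> simp [this]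



variable {α β σ : Type*} [Primcodable α] [Primcodable β] [Primcodable σ]

theorem computable_nat_find {p : α → ℕ → Bool}
    (hp : Computable₂ p) (hex : ∀ a, ∃ n, p a n = true) :
    Computable fun a => Nat.find (hex a) := by
  have pp : Partrec₂ fun (a : α) (n : ℕ) => (p a n : Part Bool) := hp.partrec₂
  have := Partrec.rfind pp
  refine Partrec.of_eq_tot this ?_
  intro a
  refine (Nat.mem_rfind (p := fun n => (p a n : Part Bool))).2 ?_
  constructor
  · simpa using Nat.find_spec (hex a)
  · intro m hm
    simpa using Nat.find_min (hex a) hm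

private theorem list_map_rec (l : List β) (G : β → σ) :
    ∀ n : ℕ, (Nat.rec [] (fun n ih =>
        (match l[n]? with | none => ih | some b => ih ++ [G b] : List σ)) n : List σ)
      = (l.take n).map G := by
  intro n
  induction n with
  | zero => simp
  | succ n ih =>
    show (match l[n]? with | none => _ | some b => _ : List σ) = _
    rcases h : l[n]? with _ | b
    · rw [List.getElem?_eq_none_iff] at h
      simp only [ih]
      rw [List.take_of_length_le h, List.take_of_length_le (le_trans h (Nat.le_succ n))]
    · simp only [ih]
      rw [List.take_succ, List.map_append]
      simp at h ⊢
      simp [h]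

theorem computable_list_map {f : α → List β} {g : α → β → σ}
    (hf : Computable f) (hg : Computable₂ g) :
    Computable fun a => (f a).map (g a) := by
  have step : Computable₂ fun (a : α) (p : ℕ × List σ) =>
      (match (f a)[p.1]? with | none => p.2 | some b => p.2 ++ [g a b] : List σ) := by
    have ho : Computable fun q : α × (ℕ × List σ) => (f q.1)[q.2.1]? :=
      Computable.list_getElem?.comp (hf.comp Computable.fst) (Computable.fst.comp Computable.snd)
    have hbig : Computable fun q : α × (ℕ × List σ) =>
        (Option.casesOn ((f q.1)[q.2.1]?) q.2.2 (fun b => q.2.2 ++ [g q.1 b]) : List σ) := by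
      refine Computable.option_casesOn ho (Computable.snd.comp Computable.snd) ?_
      exact (Computable.list_concat.comp
          ((Computable.snd.comp Computable.snd).comp Computable.fst)
          (hg.comp (Computable.fst.comp Computable.fst) Computable.snd)).to₂
    refine Computable₂.mk (hbig.of_eq ?_)
    intro q
    rcases (f q.1)[q.2.1]? with _ | b <;> rfl
  have h1 : Computable fun a => (Nat.rec [] (fun n ih =>
      (match (f a)[n]? with | none => ih | some b => ih ++ [g a b] : List σ))
      ((f a).length) : List σ) :=
    Computable.nat_rec (Computable.list_length.comp hf) (Computable.const []) step
  refine h1.of_eq fun a => ?_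
  rw [list_map_rec (f a) (g a) (f a).length, List.take_length]

/-- recursive max of `u` below `M` -/
def recMax (u : ℕ → ℕ) (M : ℕ) : ℕ := Nat.rec 0 (fun j ih => max ih (u j)) M

theorem le_recMax {u : ℕ → ℕ} {j M : ℕ} (h : j < M) : u j ≤ recMax u M := by
  induction M with
  | zero => omega
  | succ M ih =>
    show u j ≤ max (recMax u M) (u M)
    rcases Nat.lt_or_ge j M with h' | h'
    · exact le_trans (ih h') (le_max_left _ _)
    · have : j = M := by omega
      subst this; exact le_max_right _ _

theorem computable_recMax {u : ℕ → ℕ} {f : α → ℕ} (hu : Computable u) (hf : Computable f) :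
    Computable fun a => recMax u (f a) := by
  exact Computable.nat_rec hf (Computable.const 0)
    ((Primrec.nat_max.to_comp.comp
      (Computable.snd.comp Computable.snd)
      (hu.comp (Computable.fst.comp Computable.snd))).to₂)

/-- count of `r < M` with `q r = true` -/
def bcnt (q : ℕ → Bool) (M : ℕ) : ℕ := Nat.rec 0 (fun r ih => ih + cond (q r) 1 0) M

theorem bcnt_succ (q : ℕ → Bool) (M : ℕ) : bcnt q (M+1) = bcnt q M + cond (q M) 1 0 := rfl

theorem bcnt_min {q : ℕ → Bool} {j : ℕ} (M : ℕ) (hq : ∀ r < M, q r = decide (r < j)) :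
    bcnt q M = min j M := by
  induction M with
  | zero => simp [bcnt]
  | succ M ih =>
    rw [bcnt_succ, ih (fun r hr => hq r (by omega)), hq M (by omega)]
    rcases Nat.lt_or_ge M j with h | h
    · simp [h]; omega
    · have : ¬ (M < j) := by omega
      simp [this]; omega

theorem bcnt_eq {q : ℕ → Bool} {j M : ℕ} (hj : j ≤ M) (hq : ∀ r < M, q r = decide (r < j)) :
    bcnt q M = j := by
  rw [bcnt_min M hq]; omega

theorem bcnt_mono {q q' : ℕ → Bool} {M M' : ℕ} (hM : M ≤ M')
    (hq : ∀ r, q r = true → q' r = true) : bcnt q M ≤ bcnt q' M' := by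
  have step1 : ∀ N, bcnt q N ≤ bcnt q' N := by
    intro N
    induction N with
    | zero => simp [bcnt]
    | succ N ih =>
      rw [bcnt_succ, bcnt_succ]
      rcases h : q N
      · simp; rcases q' N <;> simp <;> omega
      · rw [hq N h]; simpa using ih
  have step2 : ∀ N N', N ≤ N' → bcnt q' N ≤ bcnt q' N' := by
    intro N N' h
    induction N' with
    | zero =>
      have : N = 0 := by omega
      subst this; exact le_refl _
    | succ N' ih =>
      rcases Nat.lt_or_ge N (N'+1) with h' | h'
      · calc bcnt q' N ≤ bcnt q' N' := ih (by omega)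
        _ ≤ _ := by rw [bcnt_succ]; omega
      · have : N = N' + 1 := by omega
        subst this; exact le_refl _
  exact le_trans (step1 M) (step2 M M' hM)

theorem computable_bcnt {q : α → ℕ → Bool} {f : α → ℕ}
    (hq : Computable₂ q) (hf : Computable f) :
    Computable fun a => bcnt (q a) (f a) := by
  exact Computable.nat_rec hf (Computable.const 0)
    ((Primrec.nat_add.to_comp.comp
        (Computable.snd.comp Computable.snd)
        (Computable.cond (hq.comp Computable.fst (Computable.fst.comp Computable.snd))
          (Computable.const 1) (Computable.const 0))).to₂)

theorem primrec_pow : Primrec₂ (fun a b : ℕ => a ^ b) :=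
  Primrec₂.unpaired'.1 Nat.Primrec.pow



theorem isOrder_id : IsOrder (fun n => n) :=
  ⟨Computable.id, fun _ _ h => h, fun m => ⟨m, le_refl m⟩⟩

theorem isOrder_min_succ {H : ℕ → ℕ} (h : IsOrder H) :
    IsOrder (fun x => min (H x) (x + 1)) := by
  obtain ⟨hc, hm, hu⟩ := h
  refine ⟨Primrec.nat_min.to_comp.comp hc Computable.succ, ?_, ?_⟩
  · intro a b hab
    exact le_min (le_trans (min_le_left _ _) (hm hab)) (le_trans (min_le_right _ _) (by omega))
  · intro m
    obtain ⟨n, hn⟩ := hu m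
    refine ⟨max n m, le_min (le_trans hn (hm (le_max_left _ _))) (by omega)⟩

/-- enumeration of all order functions -/
theorem orders_enum : ∃ H : ℕ → (ℕ → ℕ),
    (∀ i, IsOrder (H i)) ∧ ∀ g, IsOrder g → ∃ i, H i = g := by
  classical
  let E : ℕ → (ℕ → ℕ) := fun i n =>
    (((Denumerable.ofNat Nat.Partrec.Code i).eval n).toOption.getD 0)
  refine ⟨fun i => if IsOrder (E i) then E i else (fun n => n), ?_, ?_⟩
  · intro i
    by_cases h : IsOrder (E i) <;> simp [h, isOrder_id]
  · intro g hg
    have hp : Nat.Partrec (fun n => Part.some (g n)) := by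
      have := hg.1
      rw [Computable, Partrec.nat_iff] at this
      exact this
    obtain ⟨c, hc⟩ := Nat.Partrec.Code.exists_code.1 hp
    refine ⟨Encodable.encode c, ?_⟩
    have hE : E (Encodable.encode c) = g := by
      funext n
      simp only [E, Denumerable.ofNat_encode, hc]
      simp [Part.toOption]
    show (if IsOrder (E (Encodable.encode c)) then E (Encodable.encode c) else fun n => n) = g
    rw [hE]
    simp [hg]

/-- value of a prefix oracle as a number, for candidate enumeration -/
def numOf (B : ℕ → Bool) (M : ℕ) : ℕ := Nat.rec 0 (fun j ih => ih + cond (B j) (2^j) 0) M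

theorem numOf_succ (B : ℕ → Bool) (M : ℕ) :
    numOf B (M+1) = numOf B M + cond (B M) (2^M) 0 := rfl

theorem numOf_lt (B : ℕ → Bool) (M : ℕ) : numOf B M < 2 ^ M := by
  induction M with
  | zero => simp [numOf]
  | succ M ih =>
    rw [numOf_succ, pow_succ]
    rcases B M <;> simp <;> omega

theorem numOf_bit {B : ℕ → Bool} {j M : ℕ} (h : j < M) :
    numOf B M / 2 ^ j % 2 = cond (B j) 1 0 := by
  induction M with
  | zero => omega
  | succ M ih =>
    rw [numOf_succ]
    rcases Nat.lt_or_ge j M with h' | h'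
    · have e : cond (B M) (2^M) 0 = (cond (B M) (2^(M - j - 1)) 0) * 2 * 2 ^ j := by
        rcases B M <;> simp
        rw [mul_assoc, ← pow_succ', ← pow_add]
        congr 1
        omega
      rw [e, Nat.add_mul_div_right _ _ (Nat.pow_pos (n := j) (by norm_num)),
        mul_comm _ 2, Nat.add_mul_mod_self_left]
      exact ih h'
    · have hj : j = M := by omega
      subst hj
      rcases hb : B j <;> simp only [hb, cond_false, cond_true]
      · rw [Nat.add_zero, Nat.div_eq_of_lt (numOf_lt B j)]
      · rw [Nat.add_div_right _ (Nat.pow_pos (n := j) (by norm_num)),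
          Nat.div_eq_of_lt (numOf_lt B j)]
  
theorem pair_le (a b : ℕ) : Nat.pair a b ≤ (a + b + 1)^2 := by
  unfold Nat.pair
  split <;> nlinarith



theorem getD_map_range {γ : Type*} {q : ℕ → γ} {k L : ℕ} (h : k < L) (d : γ) :
    ((List.range L).map q).getD k d = q k := by
  rw [List.getD_eq_getElem?_getD]
  simp [List.getElem?_map, List.getElem?_range h]

theorem numOf_bit' {B : ℕ → Bool} {j M : ℕ} (h : j < M) :
    decide (numOf B M / 2 ^ j % 2 = 1) = B j := by
  rw [numOf_bit h]
  rcases B j <;> simp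

theorem find_package {α : Type*} [Primcodable α] {p : α → ℕ → Bool}
    (hp : Computable₂ p) (hex : ∀ a, ∃ n, p a n = true) :
    ∃ ρ : α → ℕ, Computable ρ ∧ (∀ a, p a (ρ a) = true) ∧
      (∀ a m, p a m = true → ρ a ≤ m) ∧ (∀ a m, m < ρ a → p a m ≠ true) :=
  ⟨fun a => Nat.find (hex a), computable_nat_find hp hex,
    fun a => Nat.find_spec (hex a),
    fun _ m hm => Nat.find_min' _ hm,
    fun _ m hm => Nat.find_min _ hm⟩

theorem trace_all {A : ℕ → Bool} (hA : SchnorrTrivial A) {g : ℕ → ℕ}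
    (hg : IsOrder g) (hg1 : ∀ m, 1 ≤ g m) :
    ∀ f : ℕ → ℕ, TtRed f A → CompTrace g f := by
  obtain ⟨h, ⟨hhc, hhm, hhu⟩, hTr⟩ := hA
  obtain ⟨ghc, ghm, ghu⟩ := hg
  rintro f ⟨u, huc, F, hFc, hFval⟩
  have hprec : Computable₂ pre := by
    refine Computable₂.mk ?_
    exact computable_list_map (Primrec.list_range.to_comp.comp Computable.snd)
      (((Primrec.list_getD false).to_comp.comp
        (Computable.fst.comp Computable.fst) Computable.snd).to₂)
  -- the inverse ρ of the trace bound h along g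
  obtain ⟨ρ, hρc, hρ1, hρ2, _⟩ := find_package (p := fun j x => decide (h j ≤ g x))
    ((Primrec.nat_le.decide.to_comp.comp (hhc.comp Computable.fst) (ghc.comp Computable.snd)).to₂)
    (fun j => by obtain ⟨x, hx⟩ := ghu (h j); exact ⟨x, by simpa using hx⟩)
  have ρ_spec : ∀ j, h j ≤ g (ρ j) := fun j => by simpa using hρ1 j
  have ρ_mono : Monotone ρ := by
    intro a c hac
    exact hρ2 a (ρ c) (by simpa using le_trans (hhm hac) (ρ_spec c))
  -- the block index
  obtain ⟨J, hJc, hJ1, _, hJ3⟩ := find_package (p := fun m j => decide (m < ρ j))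
    ((Primrec.nat_lt.decide.to_comp.comp Computable.fst (hρc.comp Computable.snd)).to₂)
    (fun m => by
      obtain ⟨j, hj⟩ := hhu (g m + 1)
      refine ⟨j, ?_⟩
      simp only [decide_eq_true_eq]
      by_contra hc
      push_neg at hc
      have h1 := le_trans hj (ρ_spec j)
      have h2 := ghm hc
      omega)
  have hJspec : ∀ m, m < ρ (J m) := fun m => by simpa using hJ1 m
  have hbc : Computable (fun m => J m - 1) :=
    Primrec.nat_sub.to_comp.comp hJc (Computable.const 1)
  have hblk : ∀ m, ρ 0 ≤ m → ρ (J m - 1) ≤ m ∧ m < ρ (J m - 1 + 1) := by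
    intro m hm
    have hJpos : 1 ≤ J m := by
      rcases Nat.eq_zero_or_pos (J m) with h0 | h1
      · exfalso
        have := hJspec m
        rw [h0] at this
        omega
      · exact h1
    refine ⟨?_, ?_⟩
    · refine le_of_not_gt fun hc => hJ3 m (J m - 1) (by omega) ?_
      simpa using hc
    · have hb1 : J m - 1 + 1 = J m := by omega
      rw [hb1]
      exact hJspec m
  -- the blocked function is tt-reducible to A, so has an h-bounded trace
  have hCT : CompTrace h (fun j =>
      Encodable.encode (((List.range (ρ (j+1) - ρ j)).map (fun r => ρ j + r)).map f)) := by
    refine hTr _ ⟨fun j => recMax u (ρ (j+1)), computable_recMax huc (hρc.comp Computable.succ),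
      fun σ j => Encodable.encode (((List.range (ρ (j+1) - ρ j)).map (fun r => ρ j + r)).map
        (fun m => F (pre σ (u m)) m)), ?_, ?_⟩
    · refine Computable₂.mk (Computable.encode.comp ?_)
      refine computable_list_map ?_
        ((hFc.comp
          (hprec.comp (Computable.fst.comp Computable.fst) (huc.comp Computable.snd))
          Computable.snd).to₂)
      exact (computable_list_map
        (Primrec.list_range.to_comp.comp
          (Primrec.nat_sub.to_comp.comp (hρc.comp Computable.succ) hρc))
        ((Primrec.nat_add.to_comp.comp (hρc.comp Computable.fst) Computable.snd).to₂)).comp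
        Computable.snd
    · intro j
      refine congrArg Encodable.encode ?_
      refine List.map_congr_left ?_
      intro m hm
      have hmρ : m < ρ (j+1) := by
        simp only [List.mem_map, List.mem_range] at hm
        obtain ⟨r, hr, he⟩ := hm
        omega
      rw [pre_opre (le_recMax hmρ), hFval m]
  obtain ⟨T', hT'c, hT'⟩ := hCT
  refine ⟨fun m => if m < ρ 0 then [((List.range (ρ 0)).map f).getD m 0]
    else (T' (J m - 1)).map
      (fun c => ((Encodable.decode (α := List ℕ) c).getD []).getD (m - ρ (J m - 1)) 0), ?_, ?_⟩
  · have hthen : Computable fun m : ℕ => [((List.range (ρ 0)).map f).getD m 0] :=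
      Computable.list_cons.comp
        ((Primrec.list_getD 0).to_comp.comp (Computable.const ((List.range (ρ 0)).map f))
          Computable.id)
        (Computable.const [])
    have helse : Computable fun m => (T' (J m - 1)).map
        (fun c => ((Encodable.decode (α := List ℕ) c).getD []).getD (m - ρ (J m - 1)) 0) := by
      refine computable_list_map (hT'c.comp hbc) ?_
      have h1 : Computable fun p : ℕ × ℕ => ((Encodable.decode (α := List ℕ) p.2).getD []) :=
        Computable.option_getD (Computable.decode.comp Computable.snd) (Computable.const [])
      have h2 : Computable fun p : ℕ × ℕ => p.1 - ρ (J p.1 - 1) :=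
        Primrec.nat_sub.to_comp.comp Computable.fst (hρc.comp (hbc.comp Computable.fst))
      exact ((Primrec.list_getD 0).to_comp.comp h1 h2).to₂
    have hcond : Computable fun m : ℕ => (decide (m < ρ 0)) :=
      (Primrec.nat_lt.comp Primrec.id (Primrec.const (ρ 0))).decide.to_comp
    have := Computable.cond hcond hthen helse
    refine this.of_eq fun m => ?_
    by_cases hm : m < ρ 0 <;> simp [hm]
  · intro m
    by_cases hm : m < ρ 0
    · simp only [if_pos hm]
      constructor
      · rw [getD_map_range hm 0]
        exact List.mem_singleton.2 rfl
      · simpa using hg1 m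
    · push_neg at hm
      simp only [if_neg (not_lt.2 hm)]
      obtain ⟨hb1, hb2⟩ := hblk m hm
      obtain ⟨hmem, hlen⟩ := hT' (J m - 1)
      constructor
      · refine List.mem_map.2 ⟨_, hmem, ?_⟩
        rw [Encodable.encodek]
        simp only [Option.getD_some, List.map_map]
        have hlt : m - ρ (J m - 1) < ρ (J m - 1 + 1) - ρ (J m - 1) := by omega
        rw [getD_map_range hlt 0]
        simp only [Function.comp_apply]
        congr 1
        omega
      · rw [List.length_map]
        calc (T' (J m - 1)).length ≤ h (J m - 1) := hlen
        _ ≤ g (ρ (J m - 1)) := ρ_spec (J m - 1)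
        _ ≤ g m := ghm hb1

theorem recMax_mono {u : ℕ → ℕ} {M M' : ℕ} (h : M ≤ M') : recMax u M ≤ recMax u M' := by
  induction M' with
  | zero =>
    have : M = 0 := by omega
    subst this; exact le_refl _
  | succ M' ih =>
    rcases Nat.lt_or_ge M (M'+1) with h' | h'
    · exact le_trans (ih (by omega)) (le_max_left _ _)
    · have : M = M' + 1 := by omega
      subst this; exact le_refl _

theorem ttu_to_schnorr {A B : ℕ → Bool} (hB : TttuRed A B) : SchnorrTrivial A := by
  have hprec : Computable₂ pre := by
    refine Computable₂.mk ?_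
    exact computable_list_map (Primrec.list_range.to_comp.comp Computable.snd)
      (((Primrec.list_getD false).to_comp.comp
        (Computable.fst.comp Computable.fst) Computable.snd).to₂)
  refine ⟨fun n => n + 2,
    ⟨Computable.succ.comp Computable.succ, fun a b hab => by show a + 2 ≤ b + 2; omega,
      fun m => ⟨m, by show m ≤ m + 2; omega⟩⟩, ?_⟩
  rintro f ⟨u, huc, F, hFc, hFval⟩
  have hu'c : Computable (fun n => n + 1 + recMax u (n + 1)) :=
    Primrec.nat_add.to_comp.comp Computable.succ (computable_recMax huc Computable.succ)
  set u' : ℕ → ℕ := fun n => n + 1 + recMax u (n + 1) with hu'def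
  have hu'smono : ∀ {j n}, j < n → u' j < u' n := by
    intro j n hjn
    have := recMax_mono (u := u) (show j + 1 ≤ n + 1 by omega)
    simp only [hu'def]
    omega
  have hu'ge : ∀ {k n}, k ≤ n → u k ≤ u' n := by
    intro k n hkn
    have := le_recMax (u := u) (show k < n + 1 by omega)
    simp only [hu'def]
    omega
  -- cnt m = least j with m ≤ u' j ; equals n at m = u' n
  obtain ⟨cnt, hcntc, hcnt1, hcnt2, _⟩ := find_package (p := fun m j => decide (m ≤ u' j))
    ((Primrec.nat_le.decide.to_comp.comp Computable.fst (hu'c.comp Computable.snd)).to₂)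
    (fun m => ⟨m, by simp only [decide_eq_true_eq, hu'def]; have := Nat.zero_le (recMax u (m+1)); omega⟩)
  have hcnt1' : ∀ m, m ≤ u' (cnt m) := fun m => by simpa using hcnt1 m
  have cnt_at : ∀ n, cnt (u' n) = n := by
    intro n
    have h1 : cnt (u' n) ≤ n := hcnt2 _ n (by simp)
    rcases Nat.lt_or_ge (cnt (u' n)) n with h2 | h2
    · exfalso
      have := hcnt1' (u' n)
      have := hu'smono h2
      omega
    · omega
  have cnt_mono : Monotone cnt := by
    intro a b hab
    exact hcnt2 a (cnt b) (by simpa using le_trans hab (hcnt1' b))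
  -- hf m = least j with 2 + cnt m < 2^(j+1)
  obtain ⟨hf, hhfc, hhf1, hhf2, hhf3⟩ :=
    find_package (p := fun m j => decide (2 + cnt m < 2 ^ (j + 1)))
    ((Primrec.nat_lt.decide.to_comp.comp
        (Primrec.nat_add.to_comp.comp (Computable.const 2) (hcntc.comp Computable.fst))
        (primrec_pow.to_comp.comp (Computable.const 2) (Computable.succ.comp Computable.snd))).to₂)
    (fun m => ⟨2 + cnt m, by
      simp only [decide_eq_true_eq]
      calc 2 + cnt m < 2 ^ (2 + cnt m) := Nat.lt_two_pow_self
      _ ≤ 2 ^ (2 + cnt m + 1) := Nat.pow_le_pow_right (by norm_num) (by omega)⟩)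
  have hhf1' : ∀ m, 2 + cnt m < 2 ^ (hf m + 1) := fun m => by simpa using hhf1 m
  have hfpow : ∀ m, 2 ^ hf m ≤ 2 + cnt m := by
    intro m
    rcases Nat.eq_zero_or_pos (hf m) with h0 | h1
    · rw [h0]; omega
    · have := hhf3 m (hf m - 1) (by omega)
      simp only [ne_eq, decide_eq_true_eq, not_lt] at this
      calc 2 ^ hf m = 2 ^ (hf m - 1 + 1) := by congr 1; omega
      _ ≤ 2 + cnt m := by simpa using this
  have hfmono : Monotone hf := by
    intro a b hab
    refine hhf2 a (hf b) ?_
    simp only [decide_eq_true_eq]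
    have := cnt_mono hab
    have := hhf1' b
    omega
  have hfunb : ∀ K, ∃ m, K ≤ hf m := by
    intro K
    refine ⟨u' (2 ^ (K + 1)), ?_⟩
    have h1 := hhf1' (u' (2 ^ (K + 1)))
    rw [cnt_at] at h1
    have h2 : 2 ^ (K + 1) < 2 ^ (hf (u' (2 ^ (K + 1))) + 1) := by omega
    have h3 := (Nat.pow_lt_pow_iff_right (by norm_num : 1 < 2)).1 h2
    omega
  obtain ⟨Fb, hFbc, hFbval⟩ := hB hf ⟨hhfc, hfmono, hfunb⟩
  refine ⟨fun n => (List.range (2 ^ hf (u' n))).map (fun v =>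
      F (pre ((List.range (u' n)).map (fun k =>
        Fb ((List.range (hf k)).map (fun j => decide (v / 2 ^ j % 2 = 1))) k)) (u n)) n),
    ?_, ?_⟩
  · have hbits : Computable fun q : (ℕ × ℕ) × ℕ =>
        (List.range (hf q.2)).map (fun j => decide (q.1.2 / 2 ^ j % 2 = 1)) := by
      refine computable_list_map (Primrec.list_range.to_comp.comp (hhfc.comp Computable.snd)) ?_
      have : Primrec fun q : ((ℕ × ℕ) × ℕ) × ℕ => decide (q.1.1.2 / 2 ^ q.2 % 2 = 1) := by
        have hdiv : Primrec fun q : ((ℕ × ℕ) × ℕ) × ℕ => q.1.1.2 / 2 ^ q.2 % 2 :=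
          Primrec.nat_mod.comp
            (Primrec.nat_div.comp (Primrec.snd.comp (Primrec.fst.comp Primrec.fst))
              (primrec_pow.comp (Primrec.const 2) Primrec.snd))
            (Primrec.const 2)
        exact (Primrec.eq.comp hdiv (Primrec.const 1)).decide
      exact (this.to_comp).to₂
    have hX : Computable fun p : ℕ × ℕ => (List.range (u' p.1)).map (fun k =>
        Fb ((List.range (hf k)).map (fun j => decide (p.2 / 2 ^ j % 2 = 1))) k) := by
      refine computable_list_map
        (Primrec.list_range.to_comp.comp (hu'c.comp Computable.fst)) ?_
      exact (hFbc.comp hbits Computable.snd).to₂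
    refine computable_list_map ?_ ?_
    · exact Primrec.list_range.to_comp.comp
        (primrec_pow.to_comp.comp (Computable.const 2) (hhfc.comp hu'c))
    · exact (hFc.comp (hprec.comp hX (huc.comp Computable.fst)) Computable.fst).to₂
  · intro n
    constructor
    · refine List.mem_map.2 ⟨numOf B (hf (u' n)), List.mem_range.2 (numOf_lt _ _), ?_⟩
      have hXeq : (List.range (u' n)).map (fun k =>
          Fb ((List.range (hf k)).map (fun j =>
            decide (numOf B (hf (u' n)) / 2 ^ j % 2 = 1))) k) = opre A (u' n) := by
        refine List.map_congr_left ?_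
        intro k hk
        rw [List.mem_range] at hk
        have hbitseq : (List.range (hf k)).map (fun j =>
            decide (numOf B (hf (u' n)) / 2 ^ j % 2 = 1)) = opre B (hf k) := by
          refine List.map_congr_left ?_
          intro j hj
          rw [List.mem_range] at hj
          exact numOf_bit' (lt_of_lt_of_le hj (hfmono hk.le))
        rw [hbitseq, hFbval k]
      rw [hXeq, pre_opre (hu'ge (le_refl n)), hFval n]
    · rw [List.length_map, List.length_range]
      have := hfpow (u' n)
      rw [cnt_at] at this
      show 2 ^ hf (u' n) ≤ n + 2
      omega

/-- block start positions: `piF n = Σ_{j<n} (j+3)` -/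
def piF : ℕ → ℕ := fun n => Nat.rec 0 (fun j ih => ih + (j + 3)) n

theorem piF_succ (n : ℕ) : piF (n + 1) = piF n + (n + 3) := rfl

theorem piF_mono : Monotone piF := by
  intro a b hab
  induction b with
  | zero =>
    have : a = 0 := by omega
    subst this; exact le_refl _
  | succ b ih =>
    rcases Nat.lt_or_ge a (b+1) with h' | h'
    · exact le_trans (ih (by omega)) (by rw [piF_succ]; omega)
    · have : a = b + 1 := by omega
      subst this; exact le_refl _

theorem piF_ge (n : ℕ) : n + 1 ≤ piF (n + 1) := by
  induction n with
  | zero => simp [piF_succ]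
  | succ n ih => rw [piF_succ]; omega

theorem piF_le (n : ℕ) : piF (n + 1) ≤ (n + 3) ^ 2 := by
  induction n with
  | zero => simp [piF_succ, piF]
  | succ n ih =>
    rw [piF_succ]
    have : (n + 3) ^ 2 + (n + 4) ≤ (n + 4) ^ 2 := by nlinarith
    calc piF (n + 1) + (n + 1 + 3) ≤ (n + 3) ^ 2 + (n + 4) := by omega
    _ ≤ (n + 4) ^ 2 := this

theorem piF_primrec : Primrec piF := by
  refine Primrec.nat_rec₁ 0 ?_
  exact Primrec.nat_add.comp Primrec.snd (Primrec.succ.comp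
    (Primrec.succ.comp (Primrec.succ.comp Primrec.fst)))

theorem strToNat_primrec : Primrec strToNat := by
  have h1 : Primrec fun s : List Bool => s.foldl (fun a b => 2 * a + cond b 1 0) 1 := by
    have hstep : Primrec fun q : List Bool × (ℕ × Bool) => 2 * q.2.1 + cond q.2.2 1 0 :=
      Primrec.nat_add.comp
        (Primrec.nat_mul.comp (Primrec.const 2) (Primrec.fst.comp Primrec.snd))
        (Primrec.cond (Primrec.snd.comp Primrec.snd) (Primrec.const 1) (Primrec.const 0))
    exact (Primrec.list_foldl (Primrec.id (α := List Bool)) (Primrec.const (1 : ℕ))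
      hstep.to₂).of_eq fun s => rfl
  exact Primrec.nat_sub.comp h1 (Primrec.const 1)

theorem fstar_red (A : ℕ → Bool) : TtRed (fun m => strToNat (opre A m)) A := by
  have hprec : Computable₂ pre := by
    refine Computable₂.mk ?_
    exact computable_list_map (Primrec.list_range.to_comp.comp Computable.snd)
      (((Primrec.list_getD false).to_comp.comp
        (Computable.fst.comp Computable.fst) Computable.snd).to₂)
  refine ⟨fun m => m, Computable.id, fun σ m => strToNat (pre σ m), ?_, ?_⟩
  · exact (strToNat_primrec.to_comp.comp (hprec.comp Computable.fst Computable.snd)).to₂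
  · intro m
    show strToNat (pre (opre A m) m) = strToNat (opre A m)
    rw [pre_opre (le_refl m)]

set_option maxHeartbeats 2000000 in
theorem schnorr_to_ttu {A : ℕ → Bool} (hA : SchnorrTrivial A) : ∃ B, TttuRed A B := by
  obtain ⟨H, hHord, hHsurj⟩ := orders_enum
  -- milestone functions t i
  have hpkg : ∀ i, ∃ t : ℕ → ℕ, Computable t ∧ (∀ {a b}, a < b → t a < t b) ∧
      (∀ n, n ≤ t n) ∧ (∀ n, (n + 3) ^ 6 ≤ min (H i (t n)) (t n + 1)) := by
    intro i
    obtain ⟨hc, hm, hu⟩ := isOrder_min_succ (hHord i)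
    obtain ⟨t0, ht0c, ht01, ht02, _⟩ :=
      find_package (p := fun n x => decide ((n + 3) ^ 6 ≤ min (H i x) (x + 1)))
      ((Primrec.nat_le.decide.to_comp.comp
          (primrec_pow.to_comp.comp
            (Primrec.nat_add.to_comp.comp Computable.fst (Computable.const 3))
            (Computable.const 6))
          (hc.comp Computable.snd)).to₂)
      (fun n => by
        obtain ⟨x, hx⟩ := hu ((n + 3) ^ 6)
        exact ⟨x, by simpa using hx⟩)
    have ht01' : ∀ n, (n + 3) ^ 6 ≤ min (H i (t0 n)) (t0 n + 1) := fun n => by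
      simpa using ht01 n
    have ht0mono : ∀ {a b}, a ≤ b → t0 a ≤ t0 b := by
      intro a b hab
      refine ht02 a (t0 b) ?_
      simp only [decide_eq_true_eq]
      calc (a + 3) ^ 6 ≤ (b + 3) ^ 6 := Nat.pow_le_pow_left (by omega) 6
      _ ≤ _ := ht01' b
    refine ⟨fun n => n + t0 n, Primrec.nat_add.to_comp.comp Computable.id ht0c,
      ?_, fun n => by show n ≤ n + t0 n; omega, fun n => ?_⟩
    · intro a b hab
      show a + t0 a < b + t0 b
      have := ht0mono (le_of_lt hab)
      omega
    · calc (n + 3) ^ 6 ≤ min (H i (t0 n)) (t0 n + 1) := ht01' n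
      _ ≤ min (H i (n + t0 n)) (n + t0 n + 1) := by
          refine le_min (le_trans (min_le_left _ _) ((hHord i).2.1 (by omega))) ?_
          exact le_trans (min_le_right _ _) (by omega)
  choose t htc hts htn htspec using hpkg
  have htmono : ∀ i, Monotone (t i) := by
    intro i a b hab
    rcases Nat.lt_or_ge a b with h | h
    · exact le_of_lt (hts i h)
    · have : a = b := by omega
      subst this; exact le_refl _
  -- the slow trace bounds tiny i
  have htiny_ord : ∀ i, IsOrder (fun m => 2 + bcnt (fun n => decide (t i n ≤ m)) (m + 1)) := by
    intro i
    refine ⟨?_, ?_, ?_⟩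
    · refine Primrec.nat_add.to_comp.comp (Computable.const 2) ?_
      refine computable_bcnt ?_ Computable.succ
      exact (Primrec.nat_le.decide.to_comp.comp ((htc i).comp Computable.snd) Computable.fst).to₂
    · intro a b hab
      show 2 + bcnt (fun n => decide (t i n ≤ a)) (a + 1) ≤
        2 + bcnt (fun n => decide (t i n ≤ b)) (b + 1)
      have : bcnt (fun n => decide (t i n ≤ a)) (a + 1) ≤
          bcnt (fun n => decide (t i n ≤ b)) (b + 1) := by
        refine bcnt_mono (by omega) ?_
        intro r hr
        simp only [decide_eq_true_eq] at hr ⊢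
        omega
      omega
    · intro m
      refine ⟨t i m, ?_⟩
      show m ≤ 2 + bcnt (fun n => decide (t i n ≤ t i m)) (t i m + 1)
      have : bcnt (fun n => decide (t i n ≤ t i m)) (t i m + 1) = m + 1 := by
        refine bcnt_eq (by have := htn i m; omega) ?_
        intro r hr
        refine decide_eq_decide.2 ?_
        constructor
        · intro hle
          by_contra hc
          push_neg at hc
          have := hts i (show m < r by omega)
          omega
        · intro hlt
          exact htmono i (by omega)
      omega
  have htiny_at : ∀ i n, 2 + bcnt (fun j => decide (t i j ≤ t i n)) (t i n + 1) = n + 3 := by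
    intro i n
    have : bcnt (fun j => decide (t i j ≤ t i n)) (t i n + 1) = n + 1 := by
      refine bcnt_eq (by have := htn i n; omega) ?_
      intro r hr
      refine decide_eq_decide.2 ?_
      constructor
      · intro hle
        by_contra hc
        push_neg at hc
        have := hts i (show n < r by omega)
        omega
      · intro hlt
        exact htmono i (by omega)
    omega
  -- traces for the prefix function
  have htrace : ∀ i, ∃ T : ℕ → List ℕ, Computable T ∧ ∀ m,
      strToNat (opre A m) ∈ T m ∧
      (T m).length ≤ 2 + bcnt (fun n => decide (t i n ≤ m)) (m + 1) :=
    fun i => trace_all hA (htiny_ord i) (fun m => by omega) _ (fstar_red A)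
  choose T hTc hT using htrace
  -- the oracle set B
  have exmblk : ∀ x : ℕ, ∃ m, x < piF (m + 1) :=
    fun x => ⟨x, by have := piF_ge x; omega⟩
  set idx : ℕ → ℕ → ℕ :=
    fun i n => (T i (t i n)).idxOf (strToNat (opre A (t i n))) with hidxdef
  set Bi : ℕ → ℕ → Bool := fun i x =>
    decide (x - piF (Nat.find (exmblk x)) < idx i (Nat.find (exmblk x))) with hBidef
  have hblk : ∀ i n r, r < n + 3 → Bi i (piF n + r) = decide (r < idx i n) := by
    intro i n r hr
    have hfind : Nat.find (exmblk (piF n + r)) = n := by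
      refine le_antisymm ?_ ?_
      · refine Nat.find_min' _ ?_
        rw [piF_succ]
        omega
      · by_contra hc
        push_neg at hc
        have h1 := Nat.find_spec (exmblk (piF n + r))
        have h2 : piF (Nat.find (exmblk (piF n + r)) + 1) ≤ piF n :=
          piF_mono (by omega)
        omega
    simp only [hBidef, hfind]
    have he : piF n + r - piF n = r := by omega
    rw [he]
  refine ⟨fun p => Bi (Nat.unpair p).1 (Nat.unpair p).2, ?_⟩
  intro h' h'ord
  obtain ⟨i, hi⟩ := hHsurj h' h'ord
  subst hi
  -- the least milestone index covering k
  obtain ⟨nf, hnfc, hnf1, hnf2, hnf3⟩ := find_package (p := fun k n => decide (k < t i n))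
    ((Primrec.nat_lt.decide.to_comp.comp Computable.fst ((htc i).comp Computable.snd)).to₂)
    (fun k => ⟨k + 1, by simp only [decide_eq_true_eq]; have := htn i (k+1); omega⟩)
  have hnf1' : ∀ k, k < t i (nf k) := fun k => by simpa using hnf1 k
  refine ⟨fun σ k => if k < t i (i + 1) + 1 then ((List.range (t i (i + 1) + 1)).map A).getD k false
    else decide (((T i (t i (nf k))).getD
        (bcnt (fun r => σ.getD (Nat.pair i (piF (nf k) + r)) false) (nf k + 3)) 0 + 1)
        / 2 ^ (t i (nf k) - 1 - k) % 2 = 1), ?_, ?_⟩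
  · -- computability of the decoding functional
    have hC : Computable fun p : List Bool × ℕ =>
        bcnt (fun r => p.1.getD (Nat.pair i (piF (nf p.2) + r)) false) (nf p.2 + 3) := by
      have h2 : Computable fun q : (List Bool × ℕ) × ℕ => Nat.pair i (piF (nf q.1.2) + q.2) :=
        Primrec₂.natPair.to_comp.comp (Computable.const i)
          (Primrec.nat_add.to_comp.comp
            (piF_primrec.to_comp.comp (hnfc.comp (Computable.snd.comp Computable.fst)))
            Computable.snd)
      have h1 : Computable fun q : (List Bool × ℕ) × ℕ =>
          q.1.1.getD (Nat.pair i (piF (nf q.1.2) + q.2)) false :=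
        (Primrec.list_getD false).to_comp.comp (Computable.fst.comp Computable.fst) h2
      exact computable_bcnt h1.to₂
        (Primrec.nat_add.to_comp.comp (hnfc.comp Computable.snd) (Computable.const 3))
    have hV : Computable fun p : List Bool × ℕ =>
        (T i (t i (nf p.2))).getD
          (bcnt (fun r => p.1.getD (Nat.pair i (piF (nf p.2) + r)) false) (nf p.2 + 3)) 0 :=
      (Primrec.list_getD 0).to_comp.comp
        ((hTc i).comp ((htc i).comp (hnfc.comp Computable.snd))) hC
    have hE : Computable fun p : List Bool × ℕ => t i (nf p.2) - 1 - p.2 :=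
      Primrec.nat_sub.to_comp.comp
        (Primrec.nat_sub.to_comp.comp ((htc i).comp (hnfc.comp Computable.snd))
          (Computable.const 1))
        Computable.snd
    have hval : Computable fun p : List Bool × ℕ =>
        ((T i (t i (nf p.2))).getD
          (bcnt (fun r => p.1.getD (Nat.pair i (piF (nf p.2) + r)) false) (nf p.2 + 3)) 0 + 1)
          / 2 ^ (t i (nf p.2) - 1 - p.2) % 2 :=
      Primrec.nat_mod.to_comp.comp
        (Primrec.nat_div.to_comp.comp
          (Primrec.nat_add.to_comp.comp hV (Computable.const 1))
          (primrec_pow.to_comp.comp (Computable.const 2) hE))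
        (Computable.const 2)
    have helse : Computable fun p : List Bool × ℕ =>
        decide (((T i (t i (nf p.2))).getD
          (bcnt (fun r => p.1.getD (Nat.pair i (piF (nf p.2) + r)) false) (nf p.2 + 3)) 0 + 1)
          / 2 ^ (t i (nf p.2) - 1 - p.2) % 2 = 1) :=
      Primrec.eq.decide.to_comp.comp hval (Computable.const 1)
    have hthen : Computable fun p : List Bool × ℕ =>
        ((List.range (t i (i + 1) + 1)).map A).getD p.2 false :=
      (Primrec.list_getD false).to_comp.comp
        (Computable.const ((List.range (t i (i + 1) + 1)).map A)) Computable.snd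
    have hcond : Computable fun p : List Bool × ℕ => decide (p.2 < t i (i + 1) + 1) :=
      (Primrec.nat_lt.comp Primrec.snd (Primrec.const (t i (i + 1) + 1))).decide.to_comp
    refine Computable₂.mk ((Computable.cond hcond hthen helse).of_eq fun p => ?_)
    by_cases hk : p.2 < t i (i + 1) + 1 <;> simp [hk]
  · -- correctness
    intro k
    by_cases hk : k < t i (i + 1) + 1
    · simp only [if_pos hk]
      exact getD_map_range hk false
    · simp only [if_neg hk]
      push_neg at hk
      set n := nf k with hndef
      have hn1 : k < t i n := hnf1' k
      have hn2 : i + 2 ≤ n := by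
        by_contra hc
        push_neg at hc
        have : t i n ≤ t i (i + 1) := htmono i (by omega)
        omega
      have hn3 : t i (n - 1) ≤ k := by
        have := hnf3 k (n - 1) (by omega)
        simp only [ne_eq, decide_eq_true_eq, not_lt] at this
        omega
      -- use bound : all positions read are within the oracle prefix
      have Hlow : (n + 2) ^ 6 ≤ H i k := by
        have h1 := htspec i (n - 1)
        have h2 : (n - 1 + 3) = n + 2 := by omega
        rw [h2] at h1
        calc (n + 2) ^ 6 ≤ H i (t i (n - 1)) := le_trans h1 (min_le_left _ _)
        _ ≤ H i k := (hHord i).2.1 hn3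
      have hidxlt : idx i n < n + 3 := by
        have hmem := (hT i (t i n)).1
        have hlen := (hT i (t i n)).2
        have := htiny_at i n
        have hlt : idx i n < (T i (t i n)).length := by
          rw [hidxdef]
          exact List.idxOf_lt_length_iff.2 hmem
        omega
      have hpos : ∀ r, r < n + 3 → Nat.pair i (piF n + r) < H i k := by
        intro r hr
        have h1 : piF n + r < (n + 3) ^ 2 := by
          have := piF_le n
          rw [piF_succ] at this
          omega
        have h2 : Nat.pair i (piF n + r) ≤ (i + (piF n + r) + 1) ^ 2 := pair_le _ _
        have h3 : i + (piF n + r) + 1 ≤ 2 * (n + 2) ^ 2 := by nlinarith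
        have h4 : (i + (piF n + r) + 1) ^ 2 ≤ (2 * (n + 2) ^ 2) ^ 2 :=
          Nat.pow_le_pow_left h3 2
        have h5 : (2 * (n + 2) ^ 2) ^ 2 < (n + 2) ^ 6 := by
          have e1 : (2 * (n + 2) ^ 2) ^ 2 = 4 * (n + 2) ^ 4 := by ring
          have e2 : (n + 2) ^ 6 = (n + 2) ^ 2 * (n + 2) ^ 4 := by ring
          rw [e1, e2]
          have h6 : 4 < (n + 2) ^ 2 := by nlinarith
          exact Nat.mul_lt_mul_of_lt_of_le h6 (le_refl _) (by positivity)
        omega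
      have hread : ∀ r, r < n + 3 →
          (opre (fun p => Bi (Nat.unpair p).1 (Nat.unpair p).2) (H i k)).getD
            (Nat.pair i (piF n + r)) false = decide (r < idx i n) := by
        intro r hr
        rw [opre_getD (hpos r hr)]
        simp only [Nat.unpair_pair]
        exact hblk i n r hr
      have hcnt : bcnt (fun r =>
          (opre (fun p => Bi (Nat.unpair p).1 (Nat.unpair p).2) (H i k)).getD
            (Nat.pair i (piF n + r)) false) (n + 3) = idx i n :=
        bcnt_eq (by omega) hread
      rw [hcnt]
      have hvV : (T i (t i n)).getD (idx i n) 0 = strToNat (opre A (t i n)) := by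
        have hmem := (hT i (t i n)).1
        rw [hidxdef]
        rw [List.getD_eq_getElem?_getD, List.getElem?_eq_getElem
          (List.idxOf_lt_length_iff.2 hmem)]
        simp [List.getElem_idxOf]
      rw [hvV]
      have := bit_extract (s := opre A (t i n)) (k := k)
        (by rw [opre_length]; exact hn1)
      rw [opre_length] at this
      rw [← this, opre_getD hn1]

end Stmt17Aux

open Stmt17Aux

theorem stmt17 (A : ℕ → Bool) : SchnorrTrivial A ↔ ∃ B, TttuRed A B :=
  ⟨Stmt17Aux.schnorr_to_ttu, fun ⟨_, hB⟩ => Stmt17Aux.ttu_to_schnorr hB⟩
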